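/- Suppose M ⊆ Aut L is a subgroup closed under G-conjugation (L/K finite Galois with group G). Then the following are equivalent and each implies M is separating with respect to K: (1) M ∩ G = {e}; (2) every nonidentity m ∈ M moves some element of K; (3) G m₁ G = G m₂ G implies m₁ and m₂ are G-conjugate. -/
import Mathlib


/-- The double coset `G m G` of a ring automorphism `m` of `L` with respect to the Galois
group `G = Gal(L/K)` (viewed inside `Aut L`). -/
def galDoubleCoset (K L : Type*) [Field K] [Field L] [Algebra K L] (m : L ≃+* L) :
    Set (L ≃+* L) :=
  {x | ∃ g₁ g₂ : L ≃ₐ[K] L, x = (g₁ : L ≃+* L) * m * (g₂ : L ≃+* L)}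

private lemma coe_alg_mul {K L : Type*} [Field K] [Field L] [Algebra K L]
    (g₁ g₂ : L ≃ₐ[K] L) :
    ((g₁ * g₂ : L ≃ₐ[K] L) : L ≃+* L) = (g₁ : L ≃+* L) * (g₂ : L ≃+* L) := rfl

private lemma fixes_to_alg {K L : Type*} [Field K] [Field L] [Algebra K L]
    (m : L ≃+* L) (h : ∀ c : K, m (algebraMap K L c) = algebraMap K L c) :
    ∃ g : L ≃ₐ[K] L, (g : L ≃+* L) = m :=
  ⟨AlgEquiv.ofRingEquiv h, rfl⟩

/-- Suppose `M ⊆ Aut L` is a subgroup closed under `G`-conjugation,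
where `L/K` is finite Galois with group `G`.  Then the following are equivalent, and each
implies that `M` is separating with respect to `K`:
(1) `M ∩ G = {e}`;
(2) every nonidentity `m ∈ M` moves some element of `K`;
(3) `G m₁ G = G m₂ G` implies `m₁` and `m₂` are `G`-conjugate. -/
theorem separating_group_characterizations
    (K L : Type*) [Field K] [Field L] [Algebra K L] [FiniteDimensional K L] [IsGalois K L]
    (M : Subgroup (L ≃+* L))
    (hconj : ∀ (g : L ≃ₐ[K] L), ∀ m ∈ M,
      ((g : L ≃+* L))⁻¹ * m * (g : L ≃+* L) ∈ M) :
    (((∀ m ∈ M, (∀ c : K, m (algebraMap K L c) = algebraMap K L c) → m = 1) ↔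
      (∀ m ∈ M, m ≠ 1 → ∃ c : K, m (algebraMap K L c) ≠ algebraMap K L c)) ∧
     ((∀ m ∈ M, m ≠ 1 → ∃ c : K, m (algebraMap K L c) ≠ algebraMap K L c) ↔
      (∀ m₁ ∈ M, ∀ m₂ ∈ M, galDoubleCoset K L m₁ = galDoubleCoset K L m₂ →
        ∃ g : L ≃ₐ[K] L, m₁ = ((g : L ≃+* L))⁻¹ * m₂ * (g : L ≃+* L)))) ∧
    ((∀ m ∈ M, (∀ c : K, m (algebraMap K L c) = algebraMap K L c) → m = 1) →
      (∀ m₁ ∈ M, ∀ m₂ ∈ M,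
        (∀ c : K, m₁ (algebraMap K L c) = m₂ (algebraMap K L c)) → m₁ = m₂)) := by
  have iff12 : (∀ m ∈ M, (∀ c : K, m (algebraMap K L c) = algebraMap K L c) → m = 1) ↔
      (∀ m ∈ M, m ≠ 1 → ∃ c : K, m (algebraMap K L c) ≠ algebraMap K L c) := by
    constructor
    · intro h m hm hne
      by_contra hc
      push_neg at hc
      exact hne (h m hm hc)
    · intro h m hm hfix
      by_contra hne
      obtain ⟨c, hc⟩ := h m hm hne
      exact hc (hfix c)
  refine ⟨⟨iff12, ?_⟩, ?_⟩
  · constructor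
    · intro h2 m₁ hm₁ m₂ hm₂ hcoset
      have h1 := iff12.mpr h2
      have hmem : m₁ ∈ galDoubleCoset K L m₂ := by
        rw [← hcoset]
        refine ⟨1, 1, ?_⟩
        show m₁ = ((1 : L ≃ₐ[K] L) : L ≃+* L) * m₁ * ((1 : L ≃ₐ[K] L) : L ≃+* L)
        rw [show ((1 : L ≃ₐ[K] L) : L ≃+* L) = 1 from rfl, one_mul, mul_one]
      obtain ⟨g₁, g₂, hg⟩ := hmem
      set n : L ≃+* L := ((g₂ : L ≃+* L))⁻¹ * m₂ * (g₂ : L ≃+* L) with hn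
      have hnM : n ∈ M := hconj g₂ m₂ hm₂
      have hp : m₁ * n⁻¹ = (g₁ : L ≃+* L) * (g₂ : L ≃+* L) := by
        rw [hg, hn]
        group
      have hpM : m₁ * n⁻¹ ∈ M := M.mul_mem hm₁ (M.inv_mem hnM)
      have hfix : ∀ c : K, (m₁ * n⁻¹) (algebraMap K L c) = algebraMap K L c := by
        intro c
        rw [hp, ← coe_alg_mul]
        exact (g₁ * g₂).commutes c
      have := h1 _ hpM hfix
      have hm₁n : m₁ = n := by
        rwa [mul_inv_eq_one] at this
      exact ⟨g₂, hm₁n⟩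
    · intro h3 m hm hne
      by_contra hc
      push_neg at hc
      obtain ⟨g₀, hg₀⟩ := fixes_to_alg m hc
      have hcoset : galDoubleCoset K L m = galDoubleCoset K L 1 := by
        ext x
        constructor
        · rintro ⟨g₁, g₂, rfl⟩
          exact ⟨g₁ * g₀, g₂, by rw [coe_alg_mul, hg₀, mul_one]⟩
        · rintro ⟨g₁, g₂, rfl⟩
          refine ⟨g₁ * g₀⁻¹, g₂, ?_⟩
          rw [coe_alg_mul, mul_one]
          have : ((g₀⁻¹ : L ≃ₐ[K] L) : L ≃+* L) * m = 1 := by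
            rw [← hg₀, ← coe_alg_mul, inv_mul_cancel]
            rfl
          rw [mul_assoc ((g₁ : L ≃+* L)) (((g₀⁻¹ : L ≃ₐ[K] L) : L ≃+* L)) m, this, mul_one]
      obtain ⟨g, hg⟩ := h3 m hm 1 M.one_mem hcoset
      rw [mul_one, inv_mul_cancel] at hg
      exact hne hg
  · intro h1 m₁ hm₁ m₂ hm₂ hagree
    have hmem : m₂⁻¹ * m₁ ∈ M := M.mul_mem (M.inv_mem hm₂) hm₁
    have hfix : ∀ c : K, (m₂⁻¹ * m₁) (algebraMap K L c) = algebraMap K L c := by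
      intro c
      have : (m₂⁻¹ * m₁) (algebraMap K L c) = m₂⁻¹ (m₁ (algebraMap K L c)) := rfl
      rw [this, hagree c]
      have : m₂⁻¹ (m₂ (algebraMap K L c)) = (m₂⁻¹ * m₂) (algebraMap K L c) := rfl
      rw [this, inv_mul_cancel]
      rfl
    have := h1 _ hmem hfix
    rw [mul_eq_one_iff_inv_eq] at this
    rw [← this, inv_inv]
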